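/- Let X be a Peano (connected, locally path-connected) H-SLT space with H ≤ π₁(X,x₀) locally quasinormal, and let α be a path from x₀ with α(1)=x. Then H_α is closed in the quasitopological fundamental group π₁^{qtop}(X,x) if and only if H_α is closed in π₁^{wh}(X,x) (the whisker topology). -/

import Mathlib

open CategoryTheory Topology
open scoped Pointwise

noncomputable section
namespace Paper

variable {X : Type*} [TopologicalSpace X]

attribute [local instance] Path.Homotopic.setoid

/-- The homotopy class of a loop as an element of the fundamental group. -/
def loopClass {x : X} (γ : Path x x) : FundamentalGroup X x :=
  (⟦γ⟧ : FundamentalGroupoid.mk x ⟶ FundamentalGroupoid.mk x)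

/-- Conjugation of the fundamental group along a path: `h ↦ [ᾱ ∗ h ∗ α]`. -/
def pathConj {x₀ x : X} (α : Path x₀ x) :
    FundamentalGroup X x₀ ≃* FundamentalGroup X x :=
  FundamentalGroup.fundamentalGroupMulEquivOfPath α

/-- The path-conjugate subgroup `H_α = [ᾱ H α]`. -/
def conjSubgroup {x₀ x : X} (H : Subgroup (FundamentalGroup X x₀)) (α : Path x₀ x) :
    Subgroup (FundamentalGroup X x) :=
  H.map (pathConj α).toMonoidHom

/-- `π(α,V)`: the subgroup of `π₁(X,x₀)` generated by classes `[α∗β∗ᾱ]`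
with `β` a loop at `α(1)` lying in `V`. -/
def piSub {x₀ x : X} (α : Path x₀ x) (V : Set X) : Subgroup (FundamentalGroup X x₀) :=
  Subgroup.closure
    {g | ∃ β : Path x x, (∀ t, β t ∈ V) ∧ g = loopClass ((α.trans β).trans α.symm)}

/-- `i₍#₎π₁(V,x)`: the image in `π₁(X,x)` of the fundamental group of `V`. -/
def loopSubgroup (x : X) (V : Set X) : Subgroup (FundamentalGroup X x) :=
  Subgroup.closure {g | ∃ β : Path x x, (∀ t, β t ∈ V) ∧ g = loopClass β}

/-- `H` is locally quasinormal. -/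
def LocallyQuasinormal {x₀ : X} (H : Subgroup (FundamentalGroup X x₀)) : Prop :=
  ∀ (x : X) (α : Path x₀ x) (U : Set X), IsOpen U → x ∈ U →
    ∃ V : Set X, V ⊆ U ∧ IsOpen V ∧ x ∈ V ∧
      (H : Set (FundamentalGroup X x₀)) * (piSub α V : Set (FundamentalGroup X x₀)) =
        (piSub α V : Set (FundamentalGroup X x₀)) * (H : Set (FundamentalGroup X x₀))

/-- `X` is an `H`-SLT space at the basepoint of `H`. -/
def SLTAt {b : X} (H : Subgroup (FundamentalGroup X b)) : Prop :=
  ∀ (x : X) (α : Path b x) (U : Set X), IsOpen U → b ∈ U →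
    ∃ V : Set X, IsOpen V ∧ x ∈ V ∧
      ∀ β : Path x x, (∀ t, β t ∈ V) →
        loopClass ((α.trans β).trans α.symm) ∈
          (H : Set (FundamentalGroup X b)) * (loopSubgroup b U : Set (FundamentalGroup X b))

/-- `X` is an `H`-SLT space. -/
def IsHSLT {x₀ : X} (H : Subgroup (FundamentalGroup X x₀)) : Prop :=
  ∀ (x : X) (δ : Path x₀ x), SLTAt (conjSubgroup H δ)

/-- `X` is a strong `H`-SLT space at the basepoint of `H`. -/
def StrongSLTAt {b : X} (H : Subgroup (FundamentalGroup X b)) : Prop :=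
  ∀ (x : X) (U : Set X), IsOpen U → b ∈ U →
    ∃ V : Set X, IsOpen V ∧ x ∈ V ∧
      ∀ (α : Path b x) (β : Path x x), (∀ t, β t ∈ V) →
        loopClass ((α.trans β).trans α.symm) ∈
          (H : Set (FundamentalGroup X b)) * (loopSubgroup b U : Set (FundamentalGroup X b))

/-- `X` is a strong `H`-SLT space. -/
def IsStrongHSLT {x₀ : X} (H : Subgroup (FundamentalGroup X x₀)) : Prop :=
  ∀ (x : X) (δ : Path x₀ x), StrongSLTAt (conjSubgroup H δ)

/-- `X` is homotopically Hausdorff relative to `H`. -/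
def HomotopicallyHausdorffRel {b : X} (H : Subgroup (FundamentalGroup X b)) : Prop :=
  ∀ (x : X) (α : Path b x) (g : FundamentalGroup X b), g ∉ H →
    ∃ U : Set X, IsOpen U ∧ x ∈ U ∧
      ∀ β : Path x x, (∀ t, β t ∈ U) →
        ∀ h ∈ H, loopClass ((α.trans β).trans α.symm) ≠ h * g

/-- `X` is homotopically path Hausdorff relative to `H`. -/
def HomotopicallyPathHausdorffRel {b : X} (H : Subgroup (FundamentalGroup X b)) : Prop :=
  ∀ (x : X) (α β : Path b x), loopClass (α.trans β.symm) ∉ H →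
    ∃ (n : ℕ), 0 < n ∧
    ∃ (t : Fin (n + 1) → unitInterval) (U : Fin n → Set X),
      StrictMono t ∧ t 0 = 0 ∧ t (Fin.last n) = 1 ∧
      (∀ i : Fin n, IsOpen (U i) ∧ ∀ s ∈ Set.Icc (t i.castSucc) (t i.succ), α s ∈ U i) ∧
      ∀ γ : Path b x,
        (∀ i : Fin n, ∀ s ∈ Set.Icc (t i.castSucc) (t i.succ), γ s ∈ U i) →
        (∀ j : Fin (n + 1), γ (t j) = α (t j)) →
        loopClass (γ.trans β.symm) ∉ H

/-- The collection of paths starting at `b`, with free endpoint. -/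
def PathsFrom (b : X) := Σ x : X, Path b x

/-- The relation identifying paths in the standard construction `X̃_H`. -/
def stdRel {b : X} (H : Subgroup (FundamentalGroup X b)) :
    PathsFrom b → PathsFrom b → Prop :=
  fun p q => ∃ h : q.1 = p.1, loopClass (p.2.trans (h ▸ q.2).symm) ∈ H

/-- The standard construction `X̃_H`. -/
def StdConstr {b : X} (H : Subgroup (FundamentalGroup X b)) := Quot (stdRel H)

/-- The class `[α]_H` of a path in the standard construction. -/
def stdClass {b : X} (H : Subgroup (FundamentalGroup X b)) (p : PathsFrom b) :
    StdConstr H :=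
  Quot.mk _ p

/-- The basic whisker neighborhood `N_H([α]_H, U)`. -/
def whiskerNbhd {b : X} (H : Subgroup (FundamentalGroup X b)) (p : PathsFrom b)
    (U : Set X) : Set (StdConstr H) :=
  {z | ∃ (y : X) (δ : Path p.1 y), (∀ t, δ t ∈ U) ∧ z = stdClass H ⟨y, p.2.trans δ⟩}

/-- The whisker topology on the standard construction. -/
def whiskerTopology {b : X} (H : Subgroup (FundamentalGroup X b)) :
    TopologicalSpace (StdConstr H) :=
  TopologicalSpace.generateFrom
    {s | ∃ (p : PathsFrom b) (U : Set X), IsOpen U ∧ p.1 ∈ U ∧ s = whiskerNbhd H p U}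

/-- The Spanier subgroup `π(𝒰, y)` of `π₁(X,y)` associated to a family `𝒰` of subsets. -/
def spanier (y : X) (𝒰 : Set (Set X)) : Subgroup (FundamentalGroup X y) :=
  Subgroup.closure
    {g | ∃ (z : X) (γ : Path y z) (β : Path z z), (∃ U ∈ 𝒰, ∀ t, β t ∈ U) ∧
          g = loopClass ((γ.trans β).trans γ.symm)}

/-- An open cover of `X`. -/
def IsOpenCover (𝒰 : Set (Set X)) : Prop :=
  (∀ U ∈ 𝒰, IsOpen U) ∧ ⋃₀ 𝒰 = Set.univ

/-- The basic lasso neighborhood `N_H([α]_H, 𝒰, U)`. -/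
def lassoNbhd {b : X} (H : Subgroup (FundamentalGroup X b)) (p : PathsFrom b)
    (𝒰 : Set (Set X)) (U : Set X) : Set (StdConstr H) :=
  {z | ∃ (l : Path p.1 p.1) (y : X) (δ : Path p.1 y),
        loopClass l ∈ spanier p.1 𝒰 ∧ (∀ t, δ t ∈ U) ∧
        z = stdClass H ⟨y, (p.2.trans l).trans δ⟩}

/-- The lasso topology on the standard construction. -/
def lassoTopology {b : X} (H : Subgroup (FundamentalGroup X b)) :
    TopologicalSpace (StdConstr H) :=
  TopologicalSpace.generateFrom
    {s | ∃ (p : PathsFrom b) (𝒰 : Set (Set X)) (U : Set X),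
          IsOpenCover 𝒰 ∧ U ∈ 𝒰 ∧ IsOpen U ∧ p.1 ∈ U ∧ s = lassoNbhd H p 𝒰 U}

/-- The endpoint projection `p_H : X̃_H → X`. -/
def endPt {b : X} (H : Subgroup (FundamentalGroup X b)) : StdConstr H → X :=
  Quot.lift (fun p => p.1) (fun _ _ h => h.1.symm)

/-- The whisker topology on the fundamental group `π₁^{wh}(X,x)`. -/
def whiskerTopOnPi (x : X) : TopologicalSpace (FundamentalGroup X x) :=
  TopologicalSpace.generateFrom
    {s | ∃ (g : FundamentalGroup X x) (U : Set X), IsOpen U ∧ x ∈ U ∧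
          s = {g' | ∃ β : Path x x, (∀ t, β t ∈ U) ∧ g' = g * loopClass β}}

/-- The quasitopological fundamental group topology `π₁^{qtop}(X,x)`: the quotient of the
compact-open topology on the loop space. -/
def qTop (x : X) : TopologicalSpace (FundamentalGroup X x) :=
  TopologicalSpace.coinduced loopClass inferInstance

/-- A map `p : E → X` (with `E` carrying the topology `tE`) has the unique path
lifting property. -/
def UniquePathLifting {E : Type*} (tE : TopologicalSpace E) (p : E → X) : Prop :=
  letI := tE
  ∀ f g : C(unitInterval, E), (∀ t, p (f t) = p (g t)) → f 0 = g 0 → f = g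

/-- The small loop subgroup `π₁ˢ(X,x)`. -/
def smallLoopSubgroup (x : X) : Subgroup (FundamentalGroup X x) :=
  ⨅ (U : Set X) (_ : IsOpen U) (_ : x ∈ U), loopSubgroup x U

/-- The Spanier group `π₁^{sp}(X,x)`: the intersection of all Spanier subgroups. -/
def spanierGroup (x : X) : Subgroup (FundamentalGroup X x) :=
  ⨅ (𝒰 : Set (Set X)) (_ : IsOpenCover 𝒰), spanier x 𝒰

/-- The path Spanier subgroup `π̃(𝒱, x₀)` of a path open cover `𝒱`. -/
def pathSpanier {b : X} (𝒱 : PathsFrom b → Set X) : Subgroup (FundamentalGroup X b) :=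
  Subgroup.closure
    {g | ∃ (p : PathsFrom b) (β : Path p.1 p.1), (∀ t, β t ∈ 𝒱 p) ∧
          g = loopClass ((p.2.trans β).trans p.2.symm)}

end Paper
end
namespace Paper
variable {X : Type*} [TopologicalSpace X]

attribute [local instance] Path.Homotopic.setoid

namespace Cor38
open unitInterval

/-- The hom in the fundamental groupoid determined by a path. -/
def hom {a b : X} (p : Path a b) : FundamentalGroupoid.mk a ⟶ FundamentalGroupoid.mk b := ⟦p⟧

lemma hom_trans {a b c : X} (p : Path a b) (q : Path b c) :
    hom (p.trans q) = hom p ≫ hom q := by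
  rw [FundamentalGroupoid.comp_eq]; rfl

lemma hom_trans_symm {a b : X} (p : Path a b) : hom p ≫ hom p.symm = 𝟙 _ := by
  rw [← hom_trans, FundamentalGroupoid.id_eq_path_refl]
  exact Quotient.sound ⟨(Path.Homotopy.reflTransSymm p).symm⟩

lemma hom_symm {a b : X} (p : Path a b) : hom p.symm = inv (hom p) :=
  IsIso.eq_inv_of_hom_inv_id (hom_trans_symm p)

lemma hom_refl {a : X} : hom (Path.refl a) = 𝟙 (FundamentalGroupoid.mk a) :=
  (FundamentalGroupoid.id_eq_path_refl _).symm

lemma hom_homotopic {a b : X} (p q : Path a b) (h : p.Homotopic q) : hom p = hom q :=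
  Quotient.sound h

lemma hom_cast {a b a' b' : X} (p : Path a b) (ha : a' = a) (hb : b' = b) :
    hom (p.cast ha hb) = eqToHom (by rw [ha]) ≫ hom p ≫ eqToHom (by rw [hb]) := by
  subst ha; subst hb
  simp only [eqToHom_refl, Category.comp_id, Category.id_comp]
  rfl

/-- The underlying arrow of an element of the fundamental group. -/
def _root_.FundamentalGroup.hom {a : X} (g : FundamentalGroup X a) :
    FundamentalGroupoid.mk a ⟶ FundamentalGroupoid.mk a := g

lemma aut_mul_hom {a : X} (g h : FundamentalGroup X a) : (g * h).hom = h.hom ≫ g.hom := rfl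

lemma aut_one_hom {a : X} : (1 : FundamentalGroup X a).hom = 𝟙 _ := rfl

lemma aut_inv_hom {a : X} (g : FundamentalGroup X a) : (g⁻¹).hom = inv g.hom :=
  IsIso.eq_inv_of_hom_inv_id (Groupoid.comp_inv g)

lemma loopClass_hom {a : X} (p : Path a a) : (loopClass p).hom = hom p := rfl

lemma aut_ext {a : X} {g h : FundamentalGroup X a} (he : g.hom = h.hom) : g = h := he

lemma loopClass_trans {a : X} (p q : Path a a) :
    loopClass (p.trans q) = loopClass q * loopClass p :=
  aut_ext (by rw [loopClass_hom, hom_trans, aut_mul_hom, loopClass_hom, loopClass_hom])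

lemma loopClass_refl {a : X} : loopClass (Path.refl a) = 1 :=
  aut_ext (by rw [loopClass_hom, hom_refl]; rfl)

lemma loopClass_symm {a : X} (p : Path a a) : loopClass p.symm = (loopClass p)⁻¹ :=
  aut_ext (by rw [loopClass_hom, hom_symm, aut_inv_hom]; rfl)


/-- Any two reparametrizations through `Path.extend` with common endpoints are homotopic. -/
lemma homotopic_extend_comp {c d : X} (q : Path c d) {a b : X} {u w : I → ℝ}
    (hu : Continuous u) (hw : Continuous w) (h0 : u 0 = w 0) (h1 : u 1 = w 1)
    (p p' : Path a b)
    (hp : ∀ t, p t = q.extend (u t)) (hp' : ∀ t, p' t = q.extend (w t)) :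
    p.Homotopic p' := by
  refine ⟨⟨⟨⟨fun st => q.extend ((1 - (st.1 : ℝ)) * u st.2 + (st.1 : ℝ) * w st.2), ?_⟩,
    ?_, ?_⟩, ?_⟩⟩
  · exact q.continuous_extend.comp (by fun_prop)
  · intro t; simp [hp t]
  · intro t; simp [hp' t]
  · rintro s t (rfl | h)
    · show q.extend _ = p 0
      rw [hp 0, h0]; congr 1; ring
    · rw [Set.mem_singleton_iff] at h
      subst h
      show q.extend _ = p 1
      rw [hp 1, h1]; congr 1; ring

/-- The subpath of `q` covering `[a, b]` (in extended-parameter coordinates). -/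
noncomputable def seg {c d : X} (q : Path c d) (a b : ℝ) : Path (q.extend a) (q.extend b) where
  toFun t := q.extend ((1 - (t : ℝ)) * a + (t : ℝ) * b)
  continuous_toFun := q.continuous_extend.comp (by fun_prop)
  source' := by norm_num
  target' := by norm_num

lemma seg_apply {c d : X} (q : Path c d) (a b : ℝ) (t : I) :
    seg q a b t = q.extend ((1 - (t : ℝ)) * a + (t : ℝ) * b) := rfl

lemma seg_comb_mem_uIcc (a b : ℝ) (t : I) :
    (1 - (t : ℝ)) * a + (t : ℝ) * b ∈ Set.uIcc a b := by
  rcases le_total a b with h | h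
  · rw [Set.uIcc_of_le h]
    constructor <;> nlinarith [t.2.1, t.2.2]
  · rw [Set.uIcc_of_ge h]
    constructor <;> nlinarith [t.2.1, t.2.2]

lemma seg_mem {c d : X} {q : Path c d} {a b : ℝ} {W : Set X}
    (h : ∀ v ∈ Set.uIcc a b, q.extend v ∈ W) (t : I) : seg q a b t ∈ W :=
  h _ (seg_comb_mem_uIcc a b t)

lemma hom_seg_trans {c d : X} (q : Path c d) (a b e : ℝ) :
    hom ((seg q a b).trans (seg q b e)) = hom (seg q a e) := by
  apply hom_homotopic
  refine homotopic_extend_comp q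
    (u := fun t => if (t : ℝ) ≤ 1/2 then (1 - 2*(t:ℝ)) * a + (2*(t:ℝ)) * b
      else (1 - (2*(t:ℝ)-1)) * b + (2*(t:ℝ)-1) * e)
    (w := fun t => (1 - (t : ℝ)) * a + (t : ℝ) * e) ?_ (by fun_prop) ?_ ?_ _ _ ?_ ?_
  · refine Continuous.if_le (by fun_prop) (by fun_prop) continuous_subtype_val
      continuous_const fun t ht => by rw [ht]; ring
  · norm_num
  · norm_num
  · intro t
    rw [Path.trans_apply]
    split_ifs with h
    · simp only [seg_apply]
    · simp only [seg_apply]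
  · intro t; rfl


lemma trans_mem_of {a b c : X} {U : Set X} {p : Path a b} {q : Path b c}
    (hp : ∀ t, p t ∈ U) (hq : ∀ t, q t ∈ U) : ∀ t, (p.trans q) t ∈ U := by
  intro t
  rw [Path.trans_apply]
  split_ifs
  · exact hp _
  · exact hq _

lemma symm_mem_of {a b : X} {U : Set X} {p : Path a b} (hp : ∀ t, p t ∈ U) :
    ∀ t, p.symm t ∈ U := fun t => hp _

lemma mem_loopSubgroup_iff {a : X} {U : Set X} (hU : a ∈ U) (g : FundamentalGroup X a) :
    g ∈ loopSubgroup a U ↔ ∃ β : Path a a, (∀ t, β t ∈ U) ∧ g = loopClass β := by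
  constructor
  · intro hg
    induction hg using Subgroup.closure_induction with
    | mem g hmem => exact hmem
    | one => exact ⟨Path.refl a, fun _ => hU, loopClass_refl.symm⟩
    | mul g h _ _ ihg ihh =>
      obtain ⟨β, hβ, rfl⟩ := ihg
      obtain ⟨β', hβ', rfl⟩ := ihh
      exact ⟨β'.trans β, trans_mem_of hβ' hβ, (loopClass_trans β' β).symm⟩
    | inv g _ ih =>
      obtain ⟨β, hβ, rfl⟩ := ih
      exact ⟨β.symm, symm_mem_of hβ, (loopClass_symm β).symm⟩
  · rintro ⟨β, hβ, rfl⟩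
    exact Subgroup.subset_closure ⟨β, hβ, rfl⟩

lemma whisker_nbhd_of_open {a : X} {O : Set (FundamentalGroup X a)}
    (hO : IsOpen[whiskerTopOnPi a] O) :
    ∀ g ∈ O, ∃ U, IsOpen U ∧ a ∈ U ∧
      ∀ β : Path a a, (∀ t, β t ∈ U) → g * loopClass β ∈ O := by
  have hO' : TopologicalSpace.GenerateOpen
      {s | ∃ (g : FundamentalGroup X a) (U : Set X), IsOpen U ∧ a ∈ U ∧
        s = {g' | ∃ β : Path a a, (∀ t, β t ∈ U) ∧ g' = g * loopClass β}} O := hO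
  clear hO
  induction hO' with
  | basic s hs =>
    obtain ⟨g₀, U, hUo, haU, rfl⟩ := hs
    rintro g ⟨β₀, hβ₀, rfl⟩
    refine ⟨U, hUo, haU, fun β hβ => ⟨β.trans β₀, trans_mem_of hβ hβ₀, ?_⟩⟩
    rw [loopClass_trans, mul_assoc]
  | univ => exact fun g _ => ⟨Set.univ, isOpen_univ, trivial, fun β _ => trivial⟩
  | inter s t _ _ ihs iht =>
    rintro g ⟨hgs, hgt⟩
    obtain ⟨U1, h1o, h1a, h1⟩ := ihs g hgs
    obtain ⟨U2, h2o, h2a, h2⟩ := iht g hgt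
    exact ⟨U1 ∩ U2, h1o.inter h2o, ⟨h1a, h2a⟩,
      fun β hβ => ⟨h1 β fun t => (hβ t).1, h2 β fun t => (hβ t).2⟩⟩
  | sUnion K _ ih =>
    rintro g ⟨s, hsK, hgs⟩
    obtain ⟨U, hUo, haU, h⟩ := ih s hsK g hgs
    exact ⟨U, hUo, haU, fun β hβ => ⟨s, hsK, h β hβ⟩⟩

lemma whisker_open_of {a : X} {O : Set (FundamentalGroup X a)}
    (h : ∀ g ∈ O, ∃ U, IsOpen U ∧ a ∈ U ∧
      ∀ β : Path a a, (∀ t, β t ∈ U) → g * loopClass β ∈ O) :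
    IsOpen[whiskerTopOnPi a] O := by
  have hU : O = ⋃₀ {s | s ⊆ O ∧ ∃ (g : FundamentalGroup X a) (U : Set X), IsOpen U ∧ a ∈ U ∧
      s = {g' | ∃ β : Path a a, (∀ t, β t ∈ U) ∧ g' = g * loopClass β}} := by
    apply Set.Subset.antisymm
    · intro g hg
      obtain ⟨U, hUo, haU, hUp⟩ := h g hg
      refine ⟨_, ⟨?_, g, U, hUo, haU, rfl⟩,
        ⟨Path.refl a, fun _ => haU, by rw [loopClass_refl, mul_one]⟩⟩
      rintro g' ⟨β, hβ, rfl⟩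
      exact hUp β hβ
    · rintro g ⟨s, ⟨hsO, _⟩, hgs⟩
      exact hsO hgs
  rw [hU]
  refine @isOpen_sUnion _ (whiskerTopOnPi a) _ ?_
  rintro s ⟨-, g, U, hUo, haU, rfl⟩
  exact TopologicalSpace.isOpen_generateFrom_of_mem ⟨g, U, hUo, haU, rfl⟩

lemma qtop_closed_iff {a : X} (S : Set (FundamentalGroup X a)) :
    @IsClosed _ (qTop a) S ↔ IsOpen {γ : Path a a | loopClass γ ∉ S} := by
  rw [← @isOpen_compl_iff _ _ (qTop a)]
  exact isOpen_coinduced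

lemma coe_mul_self {G : Type*} [Group G] (K : Subgroup G) : (K : Set G) * K = K := by
  apply Set.Subset.antisymm
  · rintro g ⟨h1, hh1, h2, hh2, rfl⟩
    exact K.mul_mem hh1 hh2
  · intro g hg
    exact ⟨g, hg, 1, K.one_mem, mul_one g⟩

lemma SL_idem {G : Type*} [Group G] {S L : Subgroup G}
    (hc : (S : Set G) * L = (L : Set G) * S) :
    ((S : Set G) * L) * ((S : Set G) * L) = (S : Set G) * L := by
  calc ((S : Set G) * L) * ((S : Set G) * L)
      = (S : Set G) * (((L : Set G) * S) * L) := by simp only [mul_assoc]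
    _ = (S : Set G) * (((S : Set G) * L) * L) := by rw [← hc]
    _ = ((S : Set G) * S) * ((L : Set G) * L) := by simp only [mul_assoc]
    _ = (S : Set G) * L := by rw [coe_mul_self, coe_mul_self]

lemma one_mem_SL {G : Type*} [Group G] (S L : Subgroup G) :
    (1 : G) ∈ (S : Set G) * L :=
  ⟨1, S.one_mem, 1, L.one_mem, mul_one 1⟩

lemma mul_mem_SL {G : Type*} [Group G] {S L : Subgroup G}
    (hc : (S : Set G) * L = (L : Set G) * S) {g h : G}
    (hg : g ∈ (S : Set G) * L) (hh : h ∈ (S : Set G) * L) : g * h ∈ (S : Set G) * L := by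
  rw [← SL_idem hc]
  exact Set.mul_mem_mul hg hh

lemma pathConj_apply_loop {x₀ a : X} (α : Path x₀ a) (β : Path a a) :
    pathConj α (loopClass ((α.trans β).trans α.symm)) = loopClass β := by
  apply aut_ext
  show Groupoid.inv (hom α) ≫ (loopClass ((α.trans β).trans α.symm)).hom ≫ hom α
    = (loopClass β).hom
  rw [Groupoid.inv_eq_inv]
  rw [loopClass_hom, loopClass_hom, hom_trans, hom_trans, hom_symm]
  simp

lemma map_conj_coe {x₀ a : X} (H : Subgroup (FundamentalGroup X x₀)) (α : Path x₀ a) :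
    (conjSubgroup H α : Set (FundamentalGroup X a)) = pathConj α '' (H : Set _) := by
  rw [conjSubgroup, Subgroup.coe_map, MulEquiv.coe_toMonoidHom]

lemma map_piSub {x₀ a : X} (α : Path x₀ a) (V : Set X) :
    pathConj α '' (piSub α V : Set (FundamentalGroup X x₀))
      = (loopSubgroup a V : Set (FundamentalGroup X a)) := by
  have key : Subgroup.map (pathConj α).toMonoidHom (piSub α V) = loopSubgroup a V := by
    rw [piSub, loopSubgroup, MonoidHom.map_closure]
    congr 1
    ext g
    constructor
    · rintro ⟨g₀, ⟨β, hβ, rfl⟩, rfl⟩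
      exact ⟨β, hβ, by simpa using pathConj_apply_loop α β⟩
    · rintro ⟨β, hβ, rfl⟩
      exact ⟨_, ⟨β, hβ, rfl⟩, by simpa using pathConj_apply_loop α β⟩
  rw [← key, Subgroup.coe_map, MulEquiv.coe_toMonoidHom]

lemma SL_comm {x₀ a : X} (H : Subgroup (FundamentalGroup X x₀)) (α : Path x₀ a) {V : Set X}
    (h : (H : Set (FundamentalGroup X x₀)) * (piSub α V : Set (FundamentalGroup X x₀))
        = (piSub α V : Set (FundamentalGroup X x₀)) * (H : Set (FundamentalGroup X x₀))) :
    (conjSubgroup H α : Set (FundamentalGroup X a)) * (loopSubgroup a V : Set _)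
      = (loopSubgroup a V : Set _) * (conjSubgroup H α : Set _) := by
  rw [map_conj_coe, ← map_piSub α V, ← Set.image_mul, ← Set.image_mul, h]


/-- From an open set of continuous maps containing a constant loop, extract a uniform
neighborhood: an open set `U ∋ a` such that every loop inside `U` lies in the open set. -/
lemma exists_nbhd_of_compactOpen {a : X} {O : Set C(I, X)} (hO : IsOpen O)
    (ha : ((Path.refl a : Path a a) : C(I, X)) ∈ O) :
    ∃ U, IsOpen U ∧ a ∈ U ∧
      ∀ β : Path a a, (∀ t, β t ∈ U) → (β : C(I, X)) ∈ O := by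
  classical
  have hb := TopologicalSpace.isTopologicalBasis_of_subbasis
    (ContinuousMap.compactOpen_eq (X := I) (Y := X))
  obtain ⟨B, hBmem, hfB, hBO⟩ := hb.exists_subset_of_mem_open ha hO
  obtain ⟨T, ⟨hTfin, hTsub⟩, rfl⟩ := hBmem
  have hchoice : ∀ s ∈ T, ∃ (p : Set I × Set X), IsCompact p.1 ∧ IsOpen p.2 ∧
      s = {f : C(I, X) | Set.MapsTo f p.1 p.2} := by
    intro s hs
    obtain ⟨K, hK, U, hU, rfl⟩ := hTsub hs
    exact ⟨(K, U), hK, hU, rfl⟩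
  choose! p hp1 hp2 hp3 using hchoice
  refine ⟨⋂ s ∈ T, (if ((p s).1 = ∅) then Set.univ else (p s).2), ?_, ?_, ?_⟩
  · exact hTfin.isOpen_biInter fun s hs => by
      split_ifs with h
      · exact isOpen_univ
      · exact hp2 s hs
  · refine Set.mem_biInter fun s hs => ?_
    split_ifs with h
    · trivial
    · obtain ⟨t, ht⟩ := Set.nonempty_iff_ne_empty.mpr h
      have := hfB s hs
      rw [hp3 s hs] at this
      exact this ht
  · intro β hβ
    apply hBO
    refine Set.mem_sInter.mpr fun s hs => ?_
    rw [hp3 s hs]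
    intro t ht
    have hne : (p s).1 ≠ ∅ := Set.nonempty_iff_ne_empty.mp ⟨t, ht⟩
    have hmem := Set.mem_iInter₂.mp (hβ t) s hs
    rw [if_neg hne] at hmem
    exact hmem

lemma whisker_closed_of_qtop_closed {a : X} {S : Set (FundamentalGroup X a)}
    (hS : @IsClosed _ (qTop a) S) : @IsClosed _ (whiskerTopOnPi a) S := by
  rw [← @isOpen_compl_iff _ _ (whiskerTopOnPi a)]
  apply whisker_open_of
  intro g hg
  obtain ⟨γ, hγ⟩ := Quotient.exists_rep g.hom
  have hgγ : g = loopClass γ := aut_ext hγ.symm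
  have hP : IsOpen {δ : Path a a | loopClass δ ∉ S} := (qtop_closed_iff S).mp hS
  have hF : Continuous fun β : Path a a => β.trans γ :=
    Path.continuous_trans.comp (continuous_id.prodMk continuous_const)
  have hQ : IsOpen ((fun β : Path a a => β.trans γ) ⁻¹' {δ | loopClass δ ∉ S}) :=
    hP.preimage hF
  obtain ⟨O, hOopen, hOeq⟩ := isOpen_induced_iff.mp hQ
  have hrefl : ((Path.refl a : Path a a) : C(I, X)) ∈ O := by
    have : (Path.refl a : Path a a) ∈ (fun β : Path a a => β.trans γ) ⁻¹' {δ | loopClass δ ∉ S} := by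
      show loopClass ((Path.refl a).trans γ) ∉ S
      rw [loopClass_trans, loopClass_refl, mul_one, ← hgγ]
      exact hg
    rw [← hOeq] at this
    exact this
  obtain ⟨U, hUo, haU, hU⟩ := exists_nbhd_of_compactOpen hOopen hrefl
  refine ⟨U, hUo, haU, fun β hβ => ?_⟩
  have : (β : C(I, X)) ∈ O := hU β hβ
  have hmem : β ∈ (fun β : Path a a => β.trans γ) ⁻¹' {δ | loopClass δ ∉ S} := by
    rw [← hOeq]; exact this
  have : loopClass (β.trans γ) ∉ S := hmem
  rw [loopClass_trans] at this
  rwa [← hgγ] at this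


/-- Build an automorphism from a loop-hom in the fundamental groupoid. -/
noncomputable def autOf {a : X} (f : FundamentalGroupoid.mk a ⟶ FundamentalGroupoid.mk a) :
    FundamentalGroup X a := f

lemma autOf_hom {a : X} (f : FundamentalGroupoid.mk a ⟶ FundamentalGroupoid.mk a) :
    (autOf f).hom = f := rfl

lemma hom_const {c d v : X} (p : Path c d) (h : ∀ t, p t = v) :
    hom p = eqToHom (show FundamentalGroupoid.mk c = FundamentalGroupoid.mk d by
      have hc : c = v := by rw [← p.source]; exact h 0
      have hd : d = v := by rw [← p.target]; exact h 1
      rw [hc, hd]) := by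
  have hc : c = v := by rw [← p.source]; exact h 0
  have hd : d = v := by rw [← p.target]; exact h 1
  have hp : p = (Path.refl v).cast hc hd := by
    ext t
    rw [h t]
    rfl
  refine (congrArg hom hp).trans ?_
  rw [hom_cast, hom_refl]
  simp

lemma seg_cast_split {c : X} (p : Path c c) (a' b : ℝ) :
    hom ((seg p 0 b).cast p.extend_zero.symm rfl)
      = hom ((seg p 0 a').cast p.extend_zero.symm rfl) ≫ hom (seg p a' b) := by
  rw [hom_cast, hom_cast]
  simp only [eqToHom_refl, Category.comp_id, Category.assoc]
  rw [← hom_trans, hom_seg_trans]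

lemma seg_cast_zero {c : X} (p : Path c c) {r : ℝ} (hr : r = 0) :
    hom ((seg p 0 r).cast p.extend_zero.symm rfl)
      = eqToHom (by rw [hr, p.extend_zero]) := by
  subst hr
  refine (hom_const _ (v := c) fun t => ?_).trans (by congr 1)
  show (seg p 0 0) t = c
  rw [seg_apply]
  norm_num [p.extend_zero]

lemma seg_cast_one {c : X} (p : Path c c) {r : ℝ} (hr : r = 1) :
    hom ((seg p 0 r).cast p.extend_zero.symm rfl)
      = hom p ≫ eqToHom (by rw [hr, p.extend_one]) := by
  subst hr
  have hseg : (seg p 0 1).cast p.extend_zero.symm rfl = p.cast rfl p.extend_one := by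
    ext t
    show (seg p 0 1) t = p t
    rw [seg_apply, show (1 - (t:ℝ)) * 0 + (t:ℝ) * 1 = (t:ℝ) by ring, Path.extend_extends']
  rw [hseg, hom_cast]
  simp

/-- The abstract telescoping argument: if between the endpoints `k/n` the loop `δ` can be
compared with `γ` by loops whose classes lie in a multiplicatively closed set `SL`, then
`[δ] = [γ] * w` for some `w ∈ SL`. -/
lemma telescope {a : X} (γ δ : Path a a) (n : ℕ)
    (SL : Set (FundamentalGroup X a)) (hone : (1 : FundamentalGroup X a) ∈ SL)
    (hmul : ∀ g ∈ SL, ∀ h ∈ SL, g * h ∈ SL)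
    (η : ∀ k : ℕ, Path (γ.extend ((k : ℝ)/n)) (δ.extend ((k : ℝ)/n)))
    (hη0 : ∀ tt, η 0 tt = a) (hηn : ∀ tt, η n tt = a) (hn : 0 < n)
    (hstep : ∀ k, k < n →
      autOf (hom ((seg γ 0 ((k : ℝ)/n)).cast γ.extend_zero.symm rfl) ≫
        (hom (η k) ≫ (hom (seg δ ((k : ℝ)/n) (((k+1 : ℕ) : ℝ)/n)) ≫
        (inv (hom (η (k+1))) ≫
        inv (hom ((seg γ 0 (((k+1 : ℕ) : ℝ)/n)).cast γ.extend_zero.symm rfl)))))) ∈ SL) :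
    ∃ w ∈ SL, loopClass δ = loopClass γ * w := by
  set Φ : ℕ → FundamentalGroup X a := fun k =>
    autOf (hom ((seg δ 0 ((k : ℝ)/n)).cast δ.extend_zero.symm rfl) ≫
      (inv (hom (η k)) ≫ inv (hom ((seg γ 0 ((k : ℝ)/n)).cast γ.extend_zero.symm rfl)))) with hΦ
  have claim : ∀ k, k ≤ n → Φ k ∈ SL := by
    intro k
    induction k with
    | zero =>
      intro _
      have h0 : Φ 0 = 1 := by
        apply aut_ext
        rw [hΦ]
        rw [autOf_hom, seg_cast_zero δ (by norm_num), seg_cast_zero γ (by norm_num),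
          hom_const (η 0) hη0]
        simp
        rfl
      rw [h0]; exact hone
    | succ k ih =>
      intro hk1
      have hk : k < n := hk1
      have hkn : k ≤ n := le_of_lt hk
      have hstepEq : Φ (k+1) =
          autOf (hom ((seg γ 0 ((k : ℝ)/n)).cast γ.extend_zero.symm rfl) ≫
            (hom (η k) ≫ (hom (seg δ ((k : ℝ)/n) (((k+1 : ℕ) : ℝ)/n)) ≫
            (inv (hom (η (k+1))) ≫
            inv (hom ((seg γ 0 (((k+1 : ℕ) : ℝ)/n)).cast γ.extend_zero.symm rfl)))))) * Φ k := by
        apply aut_ext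
        rw [hΦ]
        show _ = _ ≫ _
        simp only [autOf, FundamentalGroup.hom]; rw [
          seg_cast_split δ ((k : ℝ)/n) (((k+1 : ℕ) : ℝ)/n)]
        simp [Category.assoc]
      rw [hstepEq]
      exact hmul _ (hstep k hk) _ (ih hkn)
  refine ⟨Φ n, claim n le_rfl, ?_⟩
  apply aut_ext
  show _ = (Φ n).hom ≫ _
  rw [hΦ]
  have hnn : ((n : ℕ) : ℝ)/n = 1 := div_self (by exact_mod_cast hn.ne')
  rw [autOf_hom, seg_cast_one δ hnn, seg_cast_one γ hnn, hom_const (η n) hηn,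
    loopClass_hom, show loopClass γ = hom γ from rfl]
  simp


lemma step_eq {a : X} (γ δ : Path a a) (rk rk1 sg : ℝ)
    (ηk : Path (γ.extend rk) (δ.extend rk)) (ηk1 : Path (γ.extend rk1) (δ.extend rk1)) :
    autOf (hom ((seg γ 0 rk).cast γ.extend_zero.symm rfl) ≫
        (hom ηk ≫ (hom (seg δ rk rk1) ≫ (inv (hom ηk1) ≫
        inv (hom ((seg γ 0 rk1).cast γ.extend_zero.symm rfl)))))) =
      loopClass ((((seg γ 0 sg).cast γ.extend_zero.symm rfl).trans
          (((seg γ rk sg).symm.trans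
            (((ηk.trans (seg δ rk rk1)).trans ηk1.symm).trans (seg γ rk rk1).symm)).trans
            (seg γ rk sg))).trans
        ((seg γ 0 sg).cast γ.extend_zero.symm rfl).symm) := by
  apply aut_ext
  rw [autOf_hom, loopClass_hom]
  simp only [hom_trans, hom_symm, hom_cast]
  simp only [show hom (seg γ 0 sg) = hom (seg γ 0 rk) ≫ hom (seg γ rk sg) from by
      rw [← hom_trans, hom_seg_trans],
    show hom (seg γ 0 rk1) = hom (seg γ 0 rk) ≫ hom (seg γ rk rk1) from by
      rw [← hom_trans, hom_seg_trans]]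
  simp [Category.assoc]


lemma qtop_closed_of_whisker_closed [LocallyPathConnectedSpace X] {x₀ a : X}
    (H : Subgroup (FundamentalGroup X x₀)) (hSLT : IsHSLT H) (hq : LocallyQuasinormal H)
    (α : Path x₀ a)
    (hwh : @IsClosed _ (whiskerTopOnPi a) (conjSubgroup H α : Set (FundamentalGroup X a))) :
    @IsClosed _ (qTop a) (conjSubgroup H α : Set (FundamentalGroup X a)) := by
  classical
  rw [qtop_closed_iff]
  rw [isOpen_iff_forall_mem_open]
  intro γ hγ
  have hγ' : loopClass γ ∉ (conjSubgroup H α : Set (FundamentalGroup X a)) := hγ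
  -- whisker neighborhood of the complement
  have hcomp : IsOpen[whiskerTopOnPi a] (conjSubgroup H α : Set (FundamentalGroup X a))ᶜ :=
    (@isOpen_compl_iff _ _ (whiskerTopOnPi a)).mpr hwh
  obtain ⟨U₀, hU₀o, haU₀, hU₀⟩ := whisker_nbhd_of_open hcomp (loopClass γ) hγ'
  -- locally quasinormal refinement
  obtain ⟨V, hVU₀, hVo, haV, hcommV⟩ := hq a α U₀ hU₀o haU₀
  have hSL : ((conjSubgroup H α : Set (FundamentalGroup X a)) * (loopSubgroup a V : Set _))
      = (loopSubgroup a V : Set _) * (conjSubgroup H α : Set _) := SL_comm H α hcommV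
  -- SLT data at every point of γ
  have hsltV : ∀ s : I, ∃ Vs : Set X, IsOpen Vs ∧ γ.extend ↑s ∈ Vs ∧
      ∀ β : Path (γ.extend ↑s) (γ.extend ↑s), (∀ t, β t ∈ Vs) →
        loopClass ((((seg γ 0 ↑s).cast γ.extend_zero.symm rfl).trans β).trans
          ((seg γ 0 ↑s).cast γ.extend_zero.symm rfl).symm) ∈
            (conjSubgroup H α : Set (FundamentalGroup X a)) * (loopSubgroup a V : Set _) :=
    fun s => hSLT a α (γ.extend ↑s) ((seg γ 0 ↑s).cast γ.extend_zero.symm rfl) V hVo haV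
  choose VS hVSo hVSmem hVS using hsltV
  -- radii of metric balls inside the `VS`-preimages
  have hrad : ∀ s : I, ∃ r : ℝ, 0 < r ∧ Metric.ball s r ⊆ γ ⁻¹' (VS s) := by
    intro s
    have hopen : IsOpen (γ ⁻¹' (VS s)) := (hVSo s).preimage γ.continuous
    have hmem : s ∈ γ ⁻¹' (VS s) := by
      show γ s ∈ VS s
      rw [← γ.extend_extends']
      exact hVSmem s
    exact Metric.isOpen_iff.mp hopen s hmem
  choose rad hrad0 hradsub using hrad
  -- Lebesgue number
  obtain ⟨ε, hε0, hεball⟩ := lebesgue_number_lemma_of_metric (isCompact_univ (X := I))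
    (fun s : I => Metric.isOpen_ball)
    (fun t _ => Set.mem_iUnion.mpr ⟨t, Metric.mem_ball_self (hrad0 t)⟩)
  obtain ⟨n₀, hn₀⟩ := exists_nat_one_div_lt hε0
  set n : ℕ := n₀ + 1 with hn
  have hnpos : 0 < n := n₀.succ_pos
  have hn0 : (0:ℝ) < n := by exact_mod_cast hnpos
  have hnlt : 1 / (n:ℝ) < ε := by rw [hn]; push_cast; exact hn₀
  have hhalf : 1 / (2*(n:ℝ)) < ε := by
    refine lt_of_le_of_lt ?_ hnlt
    rw [div_le_div_iff₀ (by positivity) hn0]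
    linarith
  -- choice of SLT centers
  have hcm : ∀ k : ℕ, k < n → ∃ sk : I, ∀ u : I,
      |((u : ℝ)) - (2*k+1)/(2*n)| < ε → u ∈ Metric.ball sk (rad sk) := by
    intro k hk
    have hk' : ((k:ℝ)+1) ≤ (n:ℝ) := by exact_mod_cast hk
    have hmemI : ((2*(k:ℝ)+1)/(2*(n:ℝ))) ∈ I := by
      constructor
      · positivity
      · rw [div_le_one (by positivity)]
        linarith
    obtain ⟨sk, hsk⟩ := hεball ⟨_, hmemI⟩ trivial
    refine ⟨sk, fun u hu => hsk ?_⟩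
    rw [Metric.mem_ball, Subtype.dist_eq, Real.dist_eq]
    exact hu
  choose! sc hsc using hcm
  -- distance computation
  have hkey : ∀ k : ℕ, k < n → ∀ w : ℝ, (k:ℝ)/n ≤ w → w ≤ ((k:ℝ)+1)/n →
      |w - (2*k+1)/(2*n)| < ε := by
    intro k hk w h1 h2
    have e1 : ((k:ℝ)+1)/n - (2*k+1)/(2*n) = 1/(2*n) := by field_simp; ring
    have e2 : (2*(k:ℝ)+1)/(2*n) - (k:ℝ)/n = 1/(2*n) := by field_simp; ring
    rw [abs_sub_lt_iff]
    constructor <;> linarith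
  -- membership of γ-values along subintervals
  have A1 : ∀ k : ℕ, k < n → ∀ v : ℝ, (k:ℝ)/n ≤ v → v ≤ ((k:ℝ)+1)/n →
      γ.extend v ∈ VS (sc k) := by
    intro k hk v hv1 hv2
    have hk' : ((k:ℝ)+1) ≤ (n:ℝ) := by exact_mod_cast hk
    have hvI : v ∈ I := by
      constructor
      · exact le_trans (by positivity) hv1
      · refine le_trans hv2 ?_
        rw [div_le_one hn0]
        linarith
    have hball : (⟨v, hvI⟩ : I) ∈ Metric.ball (sc k) (rad (sc k)) :=
      hsc k hk _ (hkey k hk v hv1 hv2)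
    have := hradsub (sc k) hball
    rwa [Path.extend_apply]
  -- membership of γ-values between `k/n` and the center `sc k`
  have A2 : ∀ k : ℕ, k < n → ∀ v : ℝ, v ∈ Set.uIcc ((k:ℝ)/n) ((sc k : ℝ)) →
      γ.extend v ∈ VS (sc k) := by
    intro k hk v hv
    have hk' : ((k:ℝ)+1) ≤ (n:ℝ) := by exact_mod_cast hk
    have htkI : ((k:ℝ)/n) ∈ I := by
      constructor
      · positivity
      · rw [div_le_one hn0]; linarith
    have htk : (⟨(k:ℝ)/n, htkI⟩ : I) ∈ Metric.ball (sc k) (rad (sc k)) :=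
      hsc k hk _ (hkey k hk _ le_rfl (by rw [div_le_div_iff₀ hn0 hn0]; nlinarith))
    have hd1 : |(k:ℝ)/n - (sc k : ℝ)| < rad (sc k) := by
      have := htk
      rwa [Metric.mem_ball, Subtype.dist_eq, Real.dist_eq] at this
    rw [abs_sub_lt_iff] at hd1
    rcases Set.mem_uIcc.mp hv with ⟨h1, h2⟩ | ⟨h1, h2⟩
    · have hvI : v ∈ I := ⟨le_trans htkI.1 h1, le_trans h2 (sc k).2.2⟩
      have : (⟨v, hvI⟩ : I) ∈ Metric.ball (sc k) (rad (sc k)) := by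
        rw [Metric.mem_ball, Subtype.dist_eq, Real.dist_eq, abs_sub_lt_iff]
        constructor <;> linarith [hrad0 (sc k)]
      have := hradsub (sc k) this
      rwa [Path.extend_apply]
    · have hvI : v ∈ I := ⟨le_trans (sc k).2.1 h1, le_trans h2 htkI.2⟩
      have : (⟨v, hvI⟩ : I) ∈ Metric.ball (sc k) (rad (sc k)) := by
        rw [Metric.mem_ball, Subtype.dist_eq, Real.dist_eq, abs_sub_lt_iff]
        constructor <;> linarith [hrad0 (sc k)]
      have := hradsub (sc k) this
      rwa [Path.extend_apply]
  -- cast helper for the `(k+1 : ℕ)` coercion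
  have hc1 : ∀ k : ℕ, (((k+1 : ℕ)):ℝ) = (k:ℝ)+1 := fun k => by push_cast; ring
  -- the path components at interior subdivision points
  have hPmem : ∀ j : ℕ, 0 < j → j < n →
      γ.extend ((j:ℝ)/n) ∈ VS (sc (j-1)) ∩ VS (sc j) := by
    intro j hj0 hjn
    have hj1 : j - 1 < n := lt_of_le_of_lt (Nat.sub_le j 1) hjn
    have hcast : ((j-1 : ℕ):ℝ) = (j:ℝ) - 1 := by
      rw [Nat.cast_sub hj0]
      norm_num
    constructor
    · refine A1 (j-1) hj1 ((j:ℝ)/n) ?_ ?_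
      · rw [hcast, div_le_div_iff₀ hn0 hn0]
        nlinarith
      · rw [hcast]
        norm_num
    · exact A1 j hjn ((j:ℝ)/n) le_rfl (by rw [div_le_div_iff₀ hn0 hn0]; nlinarith)
  -- subdivision points as elements of I
  have hqpI : ∀ k : ℕ, min ((k:ℝ)/n) 1 ∈ I :=
    fun k => ⟨le_min (by positivity) zero_le_one, min_le_right _ _⟩
  set qp : ℕ → I := fun k => ⟨min ((k:ℝ)/n) 1, hqpI k⟩ with hqp
  have hqpv : ∀ k : ℕ, k ≤ n → (qp k : ℝ) = (k:ℝ)/n := by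
    intro k hk
    show min ((k:ℝ)/n) 1 = (k:ℝ)/n
    rw [min_eq_left]
    rw [div_le_one hn0]
    exact_mod_cast hk
  -- the path components
  set Pset : ℕ → Set X := fun j =>
    pathComponentIn (VS (sc (j-1)) ∩ VS (sc j)) (γ.extend ((j:ℝ)/n)) with hPset
  have hPopen : ∀ j : ℕ, IsOpen (Pset j) :=
    fun j => ((hVSo (sc (j-1))).inter (hVSo (sc j))).pathComponentIn _
  -- the compact subintervals
  set Kset : ℕ → Set I := fun k => Subtype.val ⁻¹' Set.Icc ((k:ℝ)/n) (((k:ℝ)+1)/n) with hKset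
  have hKcpt : ∀ k, IsCompact (Kset k) :=
    fun k => (isClosed_Icc.preimage continuous_subtype_val).isCompact
  -- the neighborhood of γ
  set N : Set (Path a a) :=
    (⋂ k ∈ Finset.range n,
      (((↑) : Path a a → C(I,X)) ⁻¹' {f | Set.MapsTo f (Kset k) (VS (sc k))})) ∩
    (⋂ k ∈ Finset.range n, {p : Path a a | 0 < k → p (qp k) ∈ Pset k}) with hN
  have hNopen : IsOpen N := by
    apply IsOpen.inter
    · refine isOpen_biInter_finset fun k _ => ?_
      exact (ContinuousMap.isOpen_setOf_mapsTo (hKcpt k) (hVSo (sc k))).preimage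
        continuous_induced_dom
    · refine isOpen_biInter_finset fun k _ => ?_
      by_cases hk : 0 < k
      · have : {p : Path a a | 0 < k → p (qp k) ∈ Pset k}
            = (fun p : Path a a => p (qp k)) ⁻¹' (Pset k) := by
          ext p; simp [hk]
        rw [this]
        exact (hPopen k).preimage (by fun_prop)
      · have : {p : Path a a | 0 < k → p (qp k) ∈ Pset k} = Set.univ := by
          ext p; simp [hk]
        rw [this]
        exact isOpen_univ
  have hγN : γ ∈ N := by
    constructor
    · refine Set.mem_iInter₂.mpr fun k hk => ?_
      intro t ht
      show γ t ∈ VS (sc k)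
      rw [← γ.extend_extends']
      exact A1 k (Finset.mem_range.mp hk) ↑t ht.1 ht.2
    · refine Set.mem_iInter₂.mpr fun k hk => fun hk0 => ?_
      have hkn : k < n := Finset.mem_range.mp hk
      have : γ (qp k) = γ.extend ((k:ℝ)/n) := by
        rw [← γ.extend_extends' (qp k), hqpv k (le_of_lt hkn)]
      rw [this]
      exact mem_pathComponentIn_self (hPmem k hk0 hkn)
  refine ⟨N, ?_, hNopen, hγN⟩
  intro δ hδ
  show loopClass δ ∉ (conjSubgroup H α : Set (FundamentalGroup X a))
  intro hδS
  -- extract the two defining properties of N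
  have hδ1 : ∀ k : ℕ, k < n → ∀ v : ℝ, (k:ℝ)/n ≤ v → v ≤ ((k:ℝ)+1)/n →
      δ.extend v ∈ VS (sc k) := by
    intro k hk v hv1 hv2
    have hk' : ((k:ℝ)+1) ≤ (n:ℝ) := by exact_mod_cast hk
    have hvI : v ∈ I := by
      constructor
      · exact le_trans (by positivity) hv1
      · refine le_trans hv2 ?_
        rw [div_le_one hn0]; linarith
    have := Set.mem_iInter₂.mp hδ.1 k (Finset.mem_range.mpr hk) (show (⟨v, hvI⟩ : I) ∈ Kset k from ⟨hv1, hv2⟩)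
    rwa [Path.extend_apply]
  have hδ2 : ∀ j : ℕ, 0 < j → j < n → δ.extend ((j:ℝ)/n) ∈ Pset j := by
    intro j hj0 hjn
    have := Set.mem_iInter₂.mp hδ.2 j (Finset.mem_range.mpr hjn) hj0
    have heq : δ (qp j) = δ.extend ((j:ℝ)/n) := by
      rw [← δ.extend_extends' (qp j), hqpv j (le_of_lt hjn)]
    rwa [heq] at this
  -- construct the connecting paths η
  have hηex : ∀ j : ℕ, ∃ η : Path (γ.extend ((j:ℝ)/n)) (δ.extend ((j:ℝ)/n)),
      (j < n → ∀ tt, η tt ∈ VS (sc j)) ∧ (0 < j → j ≤ n → ∀ tt, η tt ∈ VS (sc (j-1))) ∧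
      ((j = 0 ∨ j = n) → ∀ tt, η tt = a) := by
    intro j
    by_cases hj0 : j = 0
    · subst hj0
      have hγ0 : γ.extend (((0:ℕ):ℝ)/n) = a := by simp
      have hδ0 : δ.extend (((0:ℕ):ℝ)/n) = a := by simp
      refine ⟨(Path.refl a).cast hγ0 hδ0, ?_, ?_, ?_⟩
      · intro _ tt
        have h0 := A1 0 hnpos 0 (by simp) (by positivity)
        rw [Path.extend_zero] at h0
        exact h0
      · intro h0c
        exact absurd h0c (lt_irrefl 0)
      · intro _ tt
        rfl
    · by_cases hjn : j < n
      · have hj0' : 0 < j := Nat.pos_of_ne_zero hj0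
        have hJ : JoinedIn (VS (sc (j-1)) ∩ VS (sc j))
            (γ.extend ((j:ℝ)/n)) (δ.extend ((j:ℝ)/n)) := hδ2 j hj0' hjn
        refine ⟨hJ.somePath, fun _ tt => (hJ.somePath_mem tt).2,
          fun _ _ tt => (hJ.somePath_mem tt).1, fun hcon => ?_⟩
        rcases hcon with h | h
        · exact absurd h hj0
        · exact absurd h (Nat.ne_of_lt hjn)
      · have hjge : (1:ℝ) ≤ (j:ℝ)/n := by
          rw [le_div_iff₀ hn0]
          push_cast
          have : n ≤ j := le_of_not_gt hjn
          exact_mod_cast by simpa using this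
        have hγ1 : γ.extend ((j:ℝ)/n) = a := by
          rw [Path.extend_of_one_le γ hjge]
        have hδ1' : δ.extend ((j:ℝ)/n) = a := by
          rw [Path.extend_of_one_le δ hjge]
        have han1 : a ∈ VS (sc (n-1)) := by
          have hsub : n - 1 < n := Nat.sub_lt hnpos one_pos
          have hcastn : ((n-1 : ℕ):ℝ) = (n:ℝ) - 1 := by
            rw [Nat.cast_sub hnpos]
            norm_num
          have h1 := A1 (n-1) hsub 1 ?_ ?_
          · rwa [Path.extend_one] at h1
          · rw [hcastn, div_le_one hn0]
            linarith
          · rw [hcastn]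
            rw [le_div_iff₀ hn0]
            linarith
        refine ⟨(Path.refl a).cast hγ1 hδ1', ?_, ?_, ?_⟩
        · intro hc
          exact absurd hc hjn
        · intro hj0c hjle tt
          have hjeq : j = n := le_antisymm hjle (le_of_not_gt hjn)
          subst hjeq
          exact han1
        · intro _ tt
          rfl
  choose η hη1 hη2 hη3 using hηex
  -- the step estimates via SLT
  have hstep : ∀ k, k < n →
      autOf (hom ((seg γ 0 ((k : ℝ)/n)).cast γ.extend_zero.symm rfl) ≫
        (hom (η k) ≫ (hom (seg δ ((k : ℝ)/n) (((k+1 : ℕ) : ℝ)/n)) ≫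
        (inv (hom (η (k+1))) ≫
        inv (hom ((seg γ 0 (((k+1 : ℕ) : ℝ)/n)).cast γ.extend_zero.symm rfl)))))) ∈
      (conjSubgroup H α : Set (FundamentalGroup X a)) * (loopSubgroup a V : Set _) := by
    intro k hk
    have hk1 : k + 1 ≤ n := hk
    have hrle : (k:ℝ)/n ≤ ((k+1:ℕ):ℝ)/n := by
      rw [hc1 k, div_le_div_iff₀ hn0 hn0]
      nlinarith
    have hcseg : ∀ tt, (seg γ ((k:ℝ)/n) ((sc k : ℝ))) tt ∈ VS (sc k) :=
      seg_mem (fun v hv => A2 k hk v hv)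
    have hsegδ : ∀ tt, (seg δ ((k:ℝ)/n) (((k+1:ℕ):ℝ)/n)) tt ∈ VS (sc k) := by
      refine seg_mem fun v hv => ?_
      rw [Set.uIcc_of_le hrle] at hv
      refine hδ1 k hk v hv.1 ?_
      rw [← hc1 k]
      exact hv.2
    have hsegγ : ∀ tt, (seg γ ((k:ℝ)/n) (((k+1:ℕ):ℝ)/n)) tt ∈ VS (sc k) := by
      refine seg_mem fun v hv => ?_
      rw [Set.uIcc_of_le hrle] at hv
      refine A1 k hk v hv.1 ?_
      rw [← hc1 k]
      exact hv.2
    have hηk1mem : ∀ tt, (η (k+1)) tt ∈ VS (sc k) := by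
      have := hη2 (k+1) k.succ_pos hk1
      simpa using this
    have hθ : ∀ tt, (((η k |>.trans (seg δ ((k:ℝ)/n) (((k+1:ℕ):ℝ)/n))).trans
        (η (k+1)).symm).trans (seg γ ((k:ℝ)/n) (((k+1:ℕ):ℝ)/n)).symm) tt ∈ VS (sc k) :=
      trans_mem_of (trans_mem_of (trans_mem_of (hη1 k hk) hsegδ) (symm_mem_of hηk1mem))
        (symm_mem_of hsegγ)
    have hB : ∀ tt, (((seg γ ((k:ℝ)/n) ((sc k : ℝ))).symm.trans
        (((η k |>.trans (seg δ ((k:ℝ)/n) (((k+1:ℕ):ℝ)/n))).trans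
          (η (k+1)).symm).trans (seg γ ((k:ℝ)/n) (((k+1:ℕ):ℝ)/n)).symm)).trans
        (seg γ ((k:ℝ)/n) ((sc k : ℝ)))) tt ∈ VS (sc k) :=
      trans_mem_of (trans_mem_of (symm_mem_of hcseg) hθ) hcseg
    have hm := hVS (sc k) _ hB
    rw [step_eq γ δ ((k:ℝ)/n) (((k+1:ℕ):ℝ)/n) ((sc k : ℝ)) (η k) (η (k+1))]
    exact hm
  -- telescope
  obtain ⟨w, hwSL, hww⟩ := telescope γ δ n
    ((conjSubgroup H α : Set (FundamentalGroup X a)) * (loopSubgroup a V : Set _))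
    (one_mem_SL _ _) (fun g hg h hh => mul_mem_SL hSL hg hh) η
    (hη3 0 (Or.inl rfl)) (hη3 n (Or.inr rfl)) hnpos hstep
  -- derive the contradiction
  obtain ⟨s₁, hs₁, l₁, hl₁, hsl⟩ := hwSL
  have hg2 : loopClass γ = loopClass δ * (l₁⁻¹ * s₁⁻¹) := by
    rw [hww, ← hsl]
    group
  have hmem2 : l₁⁻¹ * s₁⁻¹ ∈
      (conjSubgroup H α : Set (FundamentalGroup X a)) * (loopSubgroup a V : Set _) := by
    rw [hSL]
    exact ⟨l₁⁻¹, (loopSubgroup a V).inv_mem hl₁, s₁⁻¹, (conjSubgroup H α).inv_mem hs₁, rfl⟩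
  obtain ⟨s₂, hs₂, l₂, hl₂, hsl₂⟩ := hmem2
  have hfin : loopClass γ * l₂⁻¹ ∈ conjSubgroup H α := by
    have hre : loopClass γ = (loopClass δ * s₂) * l₂ := by
      rw [hg2, ← hsl₂, mul_assoc]
    rw [hre]
    simpa only [mul_inv_cancel_right] using (conjSubgroup H α).mul_mem hδS hs₂
  obtain ⟨β, hβV, hβeq⟩ := (mem_loopSubgroup_iff haV l₂).mp hl₂
  have hfin2 : loopClass γ * loopClass β.symm ∈
      (conjSubgroup H α : Set (FundamentalGroup X a)) := by
    rw [loopClass_symm, ← hβeq]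
    exact hfin
  exact hU₀ β.symm (fun t => hVU₀ (symm_mem_of hβV t)) hfin2

end Cor38

/-- Corollary 3.8: for a Peano `H`-SLT space with `H` locally quasinormal,
`H_α` is closed in `π₁^{qtop}(X,x)` iff it is closed in `π₁^{wh}(X,x)`. -/
theorem closed_qtop_iff_closed_whisker [ConnectedSpace X] [LocallyPathConnectedSpace X]
    {x₀ x : X} (H : Subgroup (FundamentalGroup X x₀)) (hSLT : IsHSLT H)
    (hq : LocallyQuasinormal H) (α : Path x₀ x) :
    @IsClosed _ (qTop x) (conjSubgroup H α : Set (FundamentalGroup X x)) ↔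
      @IsClosed _ (whiskerTopOnPi x)
        (conjSubgroup H α : Set (FundamentalGroup X x)) :=
  ⟨fun h => Cor38.whisker_closed_of_qtop_closed h,
   fun h => Cor38.qtop_closed_of_whisker_closed H hSLT hq α h⟩

end Paper
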